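/- Let x₁,...,x_N be independent standard real Gaussian random variables and f ∈ ℝ[X₁,...,X_N] a nonzero polynomial. Then there exist constants A > 0, d > 0, K > 0 depending only on f such that for all 0 ≤ δ < K, P(|f(x₁,...,x_N)| < δ) ≤ A·δ^(1/d). -/

import Mathlib

open MeasureTheory ProbabilityTheory Real Polynomial
open scoped ENNReal NNReal



lemma sb_one_var (p : Polynomial ℝ) (hd : 1 ≤ p.natDegree) {δ : ℝ} (hδ : 0 ≤ δ) :
    volume {x : ℝ | |p.eval x| < δ} ≤
      ENNReal.ofReal ((2 * p.natDegree) *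
        (δ / |p.leadingCoeff|) ^ ((1 : ℝ) / p.natDegree)) := by
  have hp : p ≠ 0 := fun h => by simp [h] at hd
  set n := p.natDegree with hn
  set L := |p.leadingCoeff| with hL
  have hL0 : 0 < L := abs_pos.mpr (leadingCoeff_ne_zero.mpr hp)
  set q : Polynomial ℂ := p.map (algebraMap ℝ ℂ) with hqdef
  have hq : q ≠ 0 := by
    simpa [hqdef, Polynomial.map_eq_zero_iff (algebraMap ℝ ℂ).injective] using hp
  have hqdeg : q.natDegree = n := p.natDegree_map_eq_of_injective (algebraMap ℝ ℂ).injective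
  have hsplit : q.Splits := IsAlgClosed.splits q
  have hcard : q.roots.card = n := by
    rw [← hqdeg]; exact (Polynomial.splits_iff_card_roots.mp hsplit)
  have hqlead : ‖q.leadingCoeff‖ = L := by
    rw [hqdef, Polynomial.leadingCoeff_map_of_injective (algebraMap ℝ ℂ).injective]
    simp [hL]
  set t : ℝ := (δ / L) ^ ((1 : ℝ) / n) with ht
  have ht0 : 0 ≤ t := Real.rpow_nonneg (by positivity) _
  -- subset of union of balls
  have hsub : {x : ℝ | |p.eval x| < δ} ⊆ ⋃ a ∈ q.roots.toFinset, Metric.ball a.re t := by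
    intro x hx
    have hev : (q.eval (x : ℂ)) = ((p.eval x : ℝ) : ℂ) := by
      rw [hqdef, Polynomial.eval_map]
      simpa using Polynomial.eval₂_at_apply (algebraMap ℝ ℂ) x
    have habs : ‖q.eval (x : ℂ)‖ = |p.eval x| := by
      rw [hev, Complex.norm_real, Real.norm_eq_abs]
    have hfac := hsplit.eq_prod_roots
    have hprodlt : (q.roots.map fun a => ‖(x : ℂ) - a‖).prod < δ / L := by
      have : ‖q.eval (x : ℂ)‖ = L * (q.roots.map fun a => ‖(x : ℂ) - a‖).prod := by
        conv_lhs => rw [hfac]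
        rw [Polynomial.eval_mul, Polynomial.eval_C, norm_mul, hqlead]
        congr 1
        rw [Polynomial.eval_multiset_prod]; change (normHom : ℂ →*₀ ℝ) _ = _; rw [map_multiset_prod, Multiset.map_map, Multiset.map_map]
        congr 1
        ext a
        simp
      rw [habs] at this
      have hxδ : |p.eval x| < δ := hx
      rw [lt_div_iff₀ hL0, mul_comm]
      linarith [this ▸ hxδ]
    by_contra hcon
    simp only [Set.mem_iUnion, Metric.mem_ball, not_exists] at hcon
    have hall : ∀ a ∈ q.roots.map fun a => ‖(x : ℂ) - a‖, t ≤ a := by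
      intro b hb
      obtain ⟨a, ha, rfl⟩ := Multiset.mem_map.mp hb
      by_contra hlt
      push_neg at hlt
      refine hcon a (Multiset.mem_toFinset.mpr ha) ?_
      calc dist x a.re = |x - a.re| := Real.dist_eq x a.re
        _ = |((x:ℂ) - a).re| := by simp
        _ ≤ ‖(x:ℂ) - a‖ := Complex.abs_re_le_norm _
        _ < t := hlt
    have key : ∀ (s : Multiset ℝ), (∀ b ∈ s, t ≤ b) → t ^ Multiset.card s ≤ s.prod := by
      intro s
      induction s using Multiset.induction with
      | empty => simp
      | cons a s ih =>
        intro h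
        have hts : ∀ b ∈ s, t ≤ b := fun b hb => h b (Multiset.mem_cons_of_mem hb)
        have h1 := ih hts
        have h2 : t ≤ a := h a (Multiset.mem_cons_self a s)
        have h3 : (0:ℝ) ≤ s.prod := le_trans (pow_nonneg ht0 _) h1
        rw [Multiset.prod_cons, Multiset.card_cons, pow_succ, mul_comm]
        exact mul_le_mul h2 h1 (pow_nonneg ht0 _) (le_trans ht0 h2)
    have := key _ hall
    rw [Multiset.card_map, hcard] at this
    have htn : t ^ n = δ / L := by
      rw [ht, ← Real.rpow_natCast _ n, ← Real.rpow_mul (by positivity)]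
      rw [one_div, inv_mul_cancel₀ (by exact_mod_cast (by omega : n ≠ 0)), Real.rpow_one]
    rw [htn] at this
    exact absurd hprodlt (not_lt.mpr this)
  calc volume {x : ℝ | |p.eval x| < δ}
      ≤ volume (⋃ a ∈ q.roots.toFinset, Metric.ball a.re t) := measure_mono hsub
    _ ≤ ∑ a ∈ q.roots.toFinset, volume (Metric.ball a.re t) := measure_biUnion_finset_le _ _
    _ ≤ q.roots.toFinset.card • ENNReal.ofReal (2 * t) := by
        refine Finset.sum_le_card_nsmul _ _ _ fun a _ => ?_
        exact le_of_eq (Real.volume_ball _ _)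
    _ ≤ n * ENNReal.ofReal (2 * t) := by
        rw [nsmul_eq_mul]
        gcongr
        exact_mod_cast Nat.cast_le.mpr (hcard ▸ q.roots.toFinset_card_le)
    _ = ENNReal.ofReal ((2 * n) * t) := by
        rw [← ENNReal.ofReal_natCast n, ← ENNReal.ofReal_mul (by positivity)]
        ring_nf



lemma sb_pdf_le_one (x : ℝ) : gaussianPDFReal 0 1 x ≤ 1 := by
  rw [gaussianPDFReal]
  simp only [NNReal.coe_one, mul_one, sub_zero]
  have h1 : 1 ≤ √(2 * π) := by
    rw [show (1:ℝ) = √1 by simp]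
    exact Real.sqrt_le_sqrt (by linarith [Real.pi_gt_three])
  have h2 : rexp (-x ^ 2 / 2) ≤ 1 := by
    rw [Real.exp_le_one_iff]
    nlinarith [sq_nonneg x]
  calc (√(2 * π))⁻¹ * rexp (-x ^ 2 / 2) ≤ 1 * 1 :=
        mul_le_mul (inv_le_one_of_one_le₀ h1) h2 (Real.exp_nonneg _) zero_le_one
    _ = 1 := mul_one 1

lemma sb_gauss_le_vol (s : Set ℝ) (hs : MeasurableSet s) :
    gaussianReal 0 1 s ≤ volume s := by
  rw [gaussianReal_apply _ one_ne_zero s]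
  calc ∫⁻ x in s, gaussianPDF 0 1 x ∂volume
      ≤ ∫⁻ _ in s, 1 ∂volume := by
        refine setLIntegral_mono measurable_const (fun x _ => ?_)
        rw [gaussianPDF]
        exact ENNReal.ofReal_le_one.mpr (sb_pdf_le_one x)
    _ = volume s := setLIntegral_one s

lemma sb_meas_set (N : ℕ) (f : MvPolynomial (Fin N) ℝ) (δ : ℝ) :
    MeasurableSet {y : Fin N → ℝ | |MvPolynomial.eval y f| < δ} :=
  measurableSet_lt (continuous_abs.comp (MvPolynomial.continuous_eval f)).measurable
    measurable_const
lemma sb_pi_gauss : ∀ (N : ℕ) (f : MvPolynomial (Fin N) ℝ), f ≠ 0 →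
    ∃ A d K : ℝ, 0 < A ∧ 0 < d ∧ 0 < K ∧ ∀ δ : ℝ, 0 ≤ δ → δ < K →
      (Measure.pi fun _ : Fin N => gaussianReal 0 1) {y | |MvPolynomial.eval y f| < δ}
        ≤ ENNReal.ofReal (A * δ ^ (1 / d)) := by
  intro N
  induction N with
  | zero =>
    intro f hf
    obtain ⟨c, rfl⟩ := MvPolynomial.C_surjective (Fin 0) f
    have hc : c ≠ 0 := fun h => hf (by rw [h, map_zero])
    refine ⟨1, 1, |c|, one_pos, one_pos, abs_pos.mpr hc, fun δ hδ0 hδK => ?_⟩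
    have : {y : Fin 0 → ℝ | |MvPolynomial.eval y (MvPolynomial.C c)| < δ} = ∅ := by
      ext y; simp only [Set.mem_setOf_eq, Set.mem_empty_iff_false, iff_false, not_lt,
        MvPolynomial.eval_C]
      exact le_of_lt hδK
    rw [this, measure_empty]
    positivity
  | succ N IH =>
    intro f hf
    set γ := gaussianReal 0 1 with hγ
    set μ : Measure (Fin N → ℝ) := Measure.pi fun _ => γ with hμ
    set q : Polynomial (MvPolynomial (Fin N) ℝ) := MvPolynomial.finSuccEquiv ℝ N f with hqdef
    have hq : q ≠ 0 := by
      simp only [hqdef, ne_eq, EmbeddingLike.map_eq_zero_iff]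
      exact hf
    set n := q.natDegree with hn
    set g := q.leadingCoeff with hg
    have hgne : g ≠ 0 := leadingCoeff_ne_zero.mpr hq
    obtain ⟨A', d', K', hA', hd', hK', hIH⟩ := IH g hgne
    refine ⟨A' + 2 * n + 1, 2 * d' + 2 * n, min (K' ^ 2) 1, by positivity, by positivity,
      lt_min (by positivity) one_pos, fun δ hδ0 hδK => ?_⟩
    set d : ℝ := 2 * d' + 2 * n with hd
    have hdpos : (0:ℝ) < d := by positivity
    -- trivial case δ = 0
    rcases eq_or_lt_of_le hδ0 with rfl | hδpos
    · have : {y : Fin (N+1) → ℝ | |MvPolynomial.eval y f| < 0} = ∅ := by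
        ext y; simp [abs_nonneg, not_lt, le_of_lt]
      rw [this, measure_empty]; exact bot_le
    have hδ1 : δ ≤ 1 := le_of_lt (lt_of_lt_of_le hδK (min_le_right _ _))
    have hδK2 : δ < K' ^ 2 := lt_of_lt_of_le hδK (min_le_left _ _)
    set ε : ℝ := δ ^ ((1:ℝ)/2) with hε
    have hεpos : 0 < ε := Real.rpow_pos_of_pos hδpos _
    have hεK' : ε < K' := by
      have : ε < (K' ^ 2) ^ ((1:ℝ)/2) :=
        Real.rpow_lt_rpow hδ0 hδK2 (by norm_num)
      calc ε < (K' ^ 2) ^ ((1:ℝ)/2) := this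
        _ = K' := by
          rw [← Real.rpow_natCast K' 2, ← Real.rpow_mul (le_of_lt hK')]
          norm_num
    have hδε : δ ≤ ε := by
      calc δ = δ ^ (1:ℝ) := (Real.rpow_one δ).symm
        _ ≤ δ ^ ((1:ℝ)/2) := Real.rpow_le_rpow_of_exponent_ge hδpos hδ1 (by norm_num)
    -- step 1: rewrite as product measure
    set e := MeasurableEquiv.piFinSuccAbove (fun _ : Fin (N+1) => ℝ) 0 with he
    have hmp : MeasurePreserving e (Measure.pi fun _ : Fin (N+1) => γ) (γ.prod μ) :=
      measurePreserving_piFinSuccAbove (fun _ : Fin (N+1) => γ) 0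
    set T : Set (ℝ × (Fin N → ℝ)) :=
      {p | |MvPolynomial.eval (Fin.cons p.1 p.2) f| < δ} with hT
    have hconsc : Continuous fun p : ℝ × (Fin N → ℝ) => (Fin.cons p.1 p.2 : Fin (N+1) → ℝ) := by
      refine continuous_pi fun i => ?_
      refine Fin.cases ?_ (fun j => ?_) i
      · simpa using continuous_fst
      · simp only [Fin.cons_succ]
        exact (continuous_apply j).comp continuous_snd
    have hTmeas : MeasurableSet T := by
      have : Continuous fun p : ℝ × (Fin N → ℝ) =>
          |MvPolynomial.eval (Fin.cons p.1 p.2) f| :=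
        continuous_abs.comp ((MvPolynomial.continuous_eval f).comp hconsc)
      exact measurableSet_lt this.measurable measurable_const
    have hpre : e ⁻¹' T = {y : Fin (N+1) → ℝ | |MvPolynomial.eval y f| < δ} := by
      ext z
      simp only [Set.mem_preimage, hT, Set.mem_setOf_eq, he,
        MeasurableEquiv.piFinSuccAbove_apply]
      rw [show (Fin.cons ((Fin.insertNthEquiv (fun _ => ℝ) 0).symm z).1
          ((Fin.insertNthEquiv (fun _ => ℝ) 0).symm z).2 : Fin (N+1) → ℝ) = z by
        simp [Fin.insertNthEquiv, Fin.removeNth_zero, Fin.cons_self_tail]]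
    have hstep1 : (Measure.pi fun _ : Fin (N+1) => γ)
        {y | |MvPolynomial.eval y f| < δ} = (γ.prod μ) T := by
      rw [← hpre]; exact hmp.measure_preimage hTmeas.nullMeasurableSet
    -- step 2: Fubini
    have hstep2 : (γ.prod μ) T
        = ∫⁻ y, γ {t : ℝ | |Polynomial.eval t (q.map (MvPolynomial.eval y))| < δ} ∂μ := by
      rw [Measure.prod_apply_symm hTmeas]
      congr 1
      ext y
      congr 1
      ext t
      simp only [Set.mem_preimage, hT, Set.mem_setOf_eq]
      rw [MvPolynomial.eval_eq_eval_mv_eval']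
    -- step 3: pointwise bound
    set E : Set (Fin N → ℝ) := {y | |MvPolynomial.eval y g| < ε} with hE
    have hEmeas : MeasurableSet E := sb_meas_set N g ε
    set c : ℝ≥0∞ := ENNReal.ofReal ((2 * n) * (δ / ε) ^ ((1:ℝ) / n)) with hc
    have hpt : ∀ y, γ {t : ℝ | |Polynomial.eval t (q.map (MvPolynomial.eval y))| < δ}
        ≤ E.indicator (fun _ => 1) y + c := by
      intro y
      by_cases hyE : y ∈ E
      · rw [Set.indicator_of_mem hyE]
        exact le_add_right prob_le_one
      · rw [Set.indicator_of_notMem hyE, zero_add]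
        have hyg : ε ≤ |MvPolynomial.eval y g| := not_lt.mp hyE
        have hlead : MvPolynomial.eval y g ≠ 0 := by
          intro h
          rw [h, abs_zero] at hyg
          linarith
        set py : Polynomial ℝ := q.map (MvPolynomial.eval y) with hpy
        have hsmeas : MeasurableSet {t : ℝ | |Polynomial.eval t py| < δ} :=
          measurableSet_lt (continuous_abs.comp (Polynomial.continuous py)).measurable
            measurable_const
        rcases Nat.eq_zero_or_pos n with hn0 | hn1
        · -- constant polynomial case
          have h0 : q.natDegree = 0 := by rw [← hn]; exact hn0
          have hqC : q = Polynomial.C g := by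
            conv_lhs => rw [Polynomial.eq_C_of_natDegree_eq_zero h0]
            rw [hg, Polynomial.leadingCoeff, h0]
          have hempty : {t : ℝ | |Polynomial.eval t py| < δ} = ∅ := by
            ext t
            simp only [Set.mem_setOf_eq, Set.mem_empty_iff_false, iff_false, not_lt, hpy, hqC,
              Polynomial.map_C, Polynomial.eval_C]
            exact le_trans hδε hyg
          rw [hempty, measure_empty]
          exact bot_le
        · -- nonconstant case: use the one-variable bound
          have hldp : py.leadingCoeff = MvPolynomial.eval y g :=
            Polynomial.leadingCoeff_map_of_leadingCoeff_ne_zero _ hlead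
          have hdeg : py.natDegree = n :=
            Polynomial.natDegree_map_of_leadingCoeff_ne_zero _ hlead
          calc γ {t : ℝ | |Polynomial.eval t py| < δ}
              ≤ volume {t : ℝ | |Polynomial.eval t py| < δ} := sb_gauss_le_vol _ hsmeas
            _ ≤ ENNReal.ofReal ((2 * py.natDegree) *
                  (δ / |py.leadingCoeff|) ^ ((1 : ℝ) / py.natDegree)) :=
                sb_one_var py (hdeg ▸ hn1) hδ0
            _ ≤ c := by
                rw [hc, hdeg, hldp]
                refine ENNReal.ofReal_le_ofReal ?_
                have hb : δ / |MvPolynomial.eval y g| ≤ δ / ε :=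
                  div_le_div_of_nonneg_left hδ0 hεpos hyg
                exact mul_le_mul_of_nonneg_left
                  (Real.rpow_le_rpow (by positivity) hb (by positivity)) (by positivity)
    -- step 4: integrate the pointwise bound
    have hstep4 : ∫⁻ y, (E.indicator (fun _ => (1:ℝ≥0∞)) y + c) ∂μ = μ E + c := by
      rw [lintegral_add_right _ measurable_const, lintegral_indicator hEmeas]
      simp [lintegral_const, measure_univ, Measure.restrict_apply_univ]
    have hEbound : μ E ≤ ENNReal.ofReal (A' * ε ^ (1 / d')) := hIH ε (le_of_lt hεpos) hεK'
    -- step 5: real arithmetic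
    have h1 : ε ^ (1 / d') ≤ δ ^ (1 / d) := by
      rw [hε, ← Real.rpow_mul hδ0]
      apply Real.rpow_le_rpow_of_exponent_ge hδpos hδ1
      rw [show (1:ℝ) / 2 * (1 / d') = 1 / (2 * d') by ring]
      apply one_div_le_one_div_of_le (by positivity)
      rw [hd]
      have hnn : (0:ℝ) ≤ 2 * (n:ℝ) := by positivity
      linarith
    have hδd0 : (0:ℝ) ≤ δ ^ (1 / d) := Real.rpow_nonneg hδ0 _
    have harith : A' * ε ^ (1 / d') + (2 * n) * (δ / ε) ^ ((1:ℝ) / n)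
        ≤ (A' + 2 * n + 1) * δ ^ (1 / d) := by
      rcases Nat.eq_zero_or_pos n with hn0 | hn1
      · have hcast : ((n:ℝ)) = 0 := by rw [hn0]; norm_num
        rw [hcast]
        have := mul_le_mul_of_nonneg_left h1 hA'.le
        nlinarith
      · have hncast : (0:ℝ) < (n:ℝ) := by exact_mod_cast hn1
        have h2 : (δ / ε) ^ ((1:ℝ) / n) ≤ δ ^ (1 / d) := by
          have hde : δ / ε = δ ^ ((1:ℝ) / 2) := by
            rw [hε]
            calc δ / δ ^ ((1:ℝ)/2) = δ ^ (1:ℝ) / δ ^ ((1:ℝ)/2) := by rw [Real.rpow_one]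
              _ = δ ^ ((1:ℝ) - 1/2) := (Real.rpow_sub hδpos 1 (1/2)).symm
              _ = δ ^ ((1:ℝ)/2) := by norm_num
          rw [hde, ← Real.rpow_mul hδ0]
          apply Real.rpow_le_rpow_of_exponent_ge hδpos hδ1
          rw [show (1:ℝ) / 2 * (1 / (n:ℝ)) = 1 / (2 * n) by ring]
          apply one_div_le_one_div_of_le (by positivity)
          rw [hd]
          nlinarith [hd'.le]
        have ha := mul_le_mul_of_nonneg_left h1 hA'.le
        have hb := mul_le_mul_of_nonneg_left h2 (by positivity : (0:ℝ) ≤ 2 * n)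
        nlinarith
    calc (Measure.pi fun _ : Fin (N+1) => γ) {y | |MvPolynomial.eval y f| < δ}
        = (γ.prod μ) T := hstep1
      _ = ∫⁻ y, γ {t : ℝ | |Polynomial.eval t (q.map (MvPolynomial.eval y))| < δ} ∂μ := hstep2
      _ ≤ ∫⁻ y, (E.indicator (fun _ => (1:ℝ≥0∞)) y + c) ∂μ := lintegral_mono hpt
      _ = μ E + c := hstep4
      _ ≤ ENNReal.ofReal (A' * ε ^ (1 / d'))
            + ENNReal.ofReal ((2 * n) * (δ / ε) ^ ((1:ℝ) / n)) := by
          rw [hc]; exact add_le_add hEbound le_rfl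
      _ = ENNReal.ofReal (A' * ε ^ (1 / d') + (2 * n) * (δ / ε) ^ ((1:ℝ) / n)) :=
          (ENNReal.ofReal_add (by positivity) (by positivity)).symm
      _ ≤ ENNReal.ofReal ((A' + 2 * n + 1) * δ ^ (1 / d)) := ENNReal.ofReal_le_ofReal harith


/-- Small-ball estimate for a nonzero polynomial in i.i.d. standard real Gaussians:
there exist constants `A, d, K > 0` (depending only on `f`) with
`P(|f(x)| < δ) ≤ A δ^(1/d)` for all `0 ≤ δ < K`. -/
theorem stmt_3 {Ω : Type*} [MeasurableSpace Ω] (P : Measure Ω) [IsProbabilityMeasure P]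
    (N : ℕ) (x : Fin N → Ω → ℝ) (hmeas : ∀ i, Measurable (x i))
    (hindep : iIndepFun x P)
    (hdist : ∀ i, Measure.map (x i) P = gaussianReal 0 1)
    (f : MvPolynomial (Fin N) ℝ) (hf : f ≠ 0) :
    ∃ A d K : ℝ, 0 < A ∧ 0 < d ∧ 0 < K ∧
      ∀ δ : ℝ, 0 ≤ δ → δ < K →
        (P {ω | |MvPolynomial.eval (fun i => x i ω) f| < δ}).toReal ≤ A * δ ^ (1 / d) := by
  obtain ⟨A, d, K, hA, hd, hK, hbound⟩ := sb_pi_gauss N f hf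
  refine ⟨A, d, K, hA, hd, hK, fun δ hδ0 hδK => ?_⟩
  set Φ : Ω → (Fin N → ℝ) := fun ω i => x i ω with hΦ
  have hΦm : Measurable Φ := measurable_pi_iff.mpr hmeas
  have hmap : Measure.map Φ P = Measure.pi fun _ : Fin N => gaussianReal 0 1 := by
    refine (Measure.pi_eq (μ := fun _ : Fin N => gaussianReal 0 1) fun B hB => ?_).symm
    rw [Measure.map_apply hΦm (MeasurableSet.univ_pi hB)]
    have hpre : Φ ⁻¹' Set.univ.pi B = ⋂ i, x i ⁻¹' B i := by
      ext ω
      simp [hΦ, Set.mem_univ_pi]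
    rw [hpre, hindep.meas_iInter (fun i => ⟨B i, hB i, rfl⟩)]
    refine Finset.prod_congr rfl fun i _ => ?_
    rw [← hdist i, Measure.map_apply (hmeas i) (hB i)]
  have key := hbound δ hδ0 hδK
  rw [← hmap, Measure.map_apply hΦm (sb_meas_set N f δ)] at key
  have hset : {ω | |MvPolynomial.eval (fun i => x i ω) f| < δ}
      = Φ ⁻¹' {y : Fin N → ℝ | |MvPolynomial.eval y f| < δ} := rfl
  rw [hset]
  refine ENNReal.toReal_le_of_le_ofReal (by positivity) key
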